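/- Let f be a real polynomial in the σ(n) variables x_{ij} (1 ≤ i ≤ j ≤ n) that is homogeneous of degree d, and let Θ(x) be the associated symmetric polynomial matrix. Let a < b and let x : (a,b) → ℝ^{σ(n)} be a differentiable curve such that for every t ∈ (a,b): tr X(x(t)) = 1, the matrix X(x(t)) is invertible, and X(x(t))·Θ(x(t)) = 0. Then the function t ↦ f(x(t)) is constant on (a,b). -/

import Mathlib

open MvPolynomial Matrix

/-- Index set for the upper-triangular entries of an `n × n` symmetric matrix. -/
abbrev SymIdx (n : ℕ) := {p : Fin n × Fin n // p.1 ≤ p.2}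

/-- The symmetric matrix `X(x)` built from a vector `x ∈ ℝ^{σ(n)}`. -/
def matOf {n : ℕ} (x : SymIdx n → ℝ) : Matrix (Fin n) (Fin n) ℝ :=
  fun i j => if h : i ≤ j then x ⟨(i, j), h⟩ else x ⟨(j, i), (le_total i j).resolve_left h⟩

/-- The partial derivative of `f` with respect to the variable `x_{ij}`. -/
noncomputable def pd {n : ℕ} (f : MvPolynomial (SymIdx n) ℝ) (i j : Fin n) :
    MvPolynomial (SymIdx n) ℝ :=
  if h : i ≤ j then pderiv ⟨(i, j), h⟩ f else pderiv ⟨(j, i), (le_total i j).resolve_left h⟩ f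

/-- The matrix `Θ(x)` associated with a degree-`d` homogeneous polynomial `f`. -/
noncomputable def thetaMat {n : ℕ} (f : MvPolynomial (SymIdx n) ℝ) (d : ℕ)
    (x : SymIdx n → ℝ) : Matrix (Fin n) (Fin n) ℝ :=
  fun i j =>
    if i = j then eval x (pd f i i) - (d : ℝ) * eval x f
    else (1 / 2) * eval x (pd f i j)

/-- Along a differentiable curve `x(t)` in the trace-one slice on which
`X(x(t))` is invertible and `X(x(t))·Θ(x(t)) = 0`, the value `f(x(t))` is
constant. -/
lemma eval_hasDerivAt {σ : Type*} [Fintype σ] [DecidableEq σ]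
    (f : MvPolynomial σ ℝ) {x : ℝ → σ → ℝ} {x' : σ → ℝ} {t : ℝ}
    (hx : ∀ p, HasDerivAt (fun u => x u p) (x' p) t) :
    HasDerivAt (fun u => eval (x u) f) (∑ p, eval (x t) (pderiv p f) * x' p) t := by
  induction f using MvPolynomial.induction_on with
  | C a => simp [hasDerivAt_const]
  | add p q hp hq =>
      simpa [add_mul, Finset.sum_add_distrib] using hp.fun_add hq
  | mul_X p s hp =>
      have h := hp.fun_mul (hx s)
      have heq : (∑ q, eval (x t) (pderiv q (p * X s)) * x' q)
          = (∑ q, eval (x t) (pderiv q p) * x' q) * x t s + eval (x t) p * x' s := by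
        simp only [pderiv_mul, pderiv_X, eval_add, eval_mul, eval_X, Pi.single_apply,
          apply_ite (eval (x t)), _root_.map_one, _root_.map_zero, add_mul, mul_ite, mul_zero, mul_one,
          ite_mul, zero_mul, Finset.sum_add_distrib, Finset.sum_ite_eq, Finset.mem_univ,
          if_true, Finset.sum_mul]
        exact congrArg₂ (· + ·) (Finset.sum_congr rfl fun q _ => by ring) rfl
      rw [heq]
      simpa using h

lemma diag_sum {n : ℕ} (F : SymIdx n → ℝ) :
    (∑ p : SymIdx n, if p.1.1 = p.1.2 then F p else 0)
      = ∑ i : Fin n, F ⟨(i, i), le_refl i⟩ := by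
  rw [← Finset.sum_filter]
  apply Finset.sum_bij' (i := fun p _ => p.1.1)
    (j := fun i _ => (⟨(i, i), le_refl i⟩ : SymIdx n))
  · intro a ha; exact Finset.mem_univ _
  · intro b hb; simp
  · intro a ha
    obtain ⟨⟨i, j⟩, hij⟩ := a
    have h : i = j := by simpa using ha
    subst h; rfl
  · intro b hb; rfl
  · intro a ha
    obtain ⟨⟨i, j⟩, hij⟩ := a
    have h : i = j := by simpa using ha
    subst h; rfl

theorem f_constant_along_curve
    (n d : ℕ) (f : MvPolynomial (SymIdx n) ℝ) (hf : f.IsHomogeneous d)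
    (a b : ℝ) (hab : a < b) (x : ℝ → SymIdx n → ℝ)
    (hdiff : ∀ t ∈ Set.Ioo a b, DifferentiableAt ℝ x t)
    (htr : ∀ t ∈ Set.Ioo a b, (matOf (x t)).trace = 1)
    (hinv : ∀ t ∈ Set.Ioo a b, IsUnit (matOf (x t)))
    (hXT : ∀ t ∈ Set.Ioo a b, matOf (x t) * thetaMat f d (x t) = 0) :
    ∀ s ∈ Set.Ioo a b, ∀ t ∈ Set.Ioo a b, eval (x s) f = eval (x t) f := by
  set g : ℝ → ℝ := fun u => eval (x u) f with hg
  -- Θ vanishes along the curve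
  have hθ : ∀ t ∈ Set.Ioo a b, thetaMat f d (x t) = 0 := fun t ht =>
    (hinv t ht).mul_left_cancel (by rw [hXT t ht, mul_zero])
  -- the derivative of g is zero on Ioo
  have hderiv : ∀ t ∈ Set.Ioo a b, HasDerivAt g 0 t := by
    intro t ht
    set x' : SymIdx n → ℝ := fun p => deriv (fun u => x u p) t with hx'
    have hx : ∀ p, HasDerivAt (fun u => x u p) (x' p) t := by
      intro p
      have : DifferentiableAt ℝ (fun u => x u p) t :=
        ((ContinuousLinearMap.proj (R := ℝ) (φ := fun _ : SymIdx n => ℝ) p).differentiableAt).comp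
          t (hdiff t ht)
      exact this.hasDerivAt
    have H := eval_hasDerivAt f hx
    -- trace derivative is zero
    have htrace : HasDerivAt (fun u => ∑ i : Fin n, x u ⟨(i, i), le_refl i⟩)
        (∑ i : Fin n, x' ⟨(i, i), le_refl i⟩) t := HasDerivAt.fun_sum fun i _ => hx _
    have hconst : HasDerivAt (fun u => ∑ i : Fin n, x u ⟨(i, i), le_refl i⟩) 0 t := by
      have hev : (fun u => ∑ i : Fin n, x u ⟨(i, i), le_refl i⟩) =ᶠ[nhds t]
          (fun _ => (1 : ℝ)) := by
        filter_upwards [isOpen_Ioo.mem_nhds ht] with u hu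
        have := htr u hu
        simpa [Matrix.trace, Matrix.diag, matOf] using this
      exact (hasDerivAt_const t (1 : ℝ)).congr_of_eventuallyEq hev
    have hsum0 : (∑ i : Fin n, x' ⟨(i, i), le_refl i⟩) = 0 := htrace.unique hconst
    -- partial derivative facts from Θ = 0
    have hdiag : ∀ i : Fin n,
        eval (x t) (pderiv (⟨(i, i), le_refl i⟩ : SymIdx n) f) = d * eval (x t) f := by
      intro i
      have h0 : thetaMat f d (x t) i i = 0 := by rw [hθ t ht]; rfl
      simp only [thetaMat, pd, dif_pos (le_refl i), eq_self_iff_true, if_true] at h0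
      linarith
    have hoff : ∀ p : SymIdx n, p.1.1 ≠ p.1.2 → eval (x t) (pderiv p f) = 0 := by
      intro p hp
      have h0 : thetaMat f d (x t) p.1.1 p.1.2 = 0 := by rw [hθ t ht]; rfl
      simp only [thetaMat, if_neg hp, pd, dif_pos p.2] at h0
      have : eval (x t) (pderiv (⟨(p.1.1, p.1.2), p.2⟩ : SymIdx n) f) = 0 := by linarith
      simpa using this
    -- compute the derivative
    have hcalc : (∑ p : SymIdx n, eval (x t) (pderiv p f) * x' p) = 0 := by
      have : ∀ p : SymIdx n, eval (x t) (pderiv p f) * x' p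
          = (d : ℝ) * eval (x t) f * (if p.1.1 = p.1.2 then x' p else 0) := by
        intro p
        obtain ⟨⟨i, j⟩, hij⟩ := p
        by_cases h : i = j
        · subst h
          rw [if_pos rfl]
          have := hdiag i
          rw [this]
        · rw [if_neg h, hoff ⟨(i, j), hij⟩ h]; ring
      rw [Finset.sum_congr rfl fun p _ => this p, ← Finset.mul_sum, _root_.diag_sum, hsum0, mul_zero]
    rw [← hcalc]
    exact H
  -- conclude constancy
  have main : ∀ s ∈ Set.Ioo a b, ∀ t ∈ Set.Ioo a b, s ≤ t → g s = g t := by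
    intro s hs t ht hst
    have hsub : Set.Icc s t ⊆ Set.Ioo a b := fun y hy =>
      ⟨lt_of_lt_of_le hs.1 hy.1, lt_of_le_of_lt hy.2 ht.2⟩
    have := constant_of_has_deriv_right_zero
      (f := g) (a := s) (b := t)
      (fun y hy => (hderiv y (hsub hy)).continuousAt.continuousWithinAt)
      (fun y hy => (hderiv y (hsub (Set.Ico_subset_Icc_self hy))).hasDerivWithinAt)
    exact (this t ⟨hst, le_refl t⟩).symm
  intro s hs t ht
  rcases le_total s t with h | h
  · exact main s hs t ht h
  · exact (main t ht s hs h).symm
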